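/- Let u : [0,1] → ℝ be continuous and let N ≥ 1. Then the supremum of ∫ u dG over all probability measures G on [0,1] that are mean-preserving contractions of ν and whose support contains at most N points is attained by some such measure G. -/

import Mathlib

open MeasureTheory Set

/-- The probability measure on `[0,1]` with density `f`. -/
noncomputable def densityMeasure (f : ℝ → ℝ) : Measure ℝ :=
  (volume.restrict (Icc (0:ℝ) 1)).withDensity fun t => ENNReal.ofReal (f t)


variable {N : ℕ}

lemma integral_fin_dirac (x p : Fin N → ℝ) (hp : ∀ i, 0 ≤ p i) (h : ℝ → ℝ) :
    ∫ t, h t ∂(∑ i, ENNReal.ofReal (p i) • Measure.dirac (x i)) = ∑ i, p i * h (x i) := by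
  rw [integral_finset_sum_measure]
  · refine Finset.sum_congr rfl fun i _ => ?_
    rw [integral_smul_measure, integral_dirac, ENNReal.toReal_ofReal (hp i), smul_eq_mul]
  · intro i _
    refine Integrable.smul_measure ?_ ENNReal.ofReal_ne_top
    exact (integrable_congr (ae_eq_dirac h)).2 (integrable_const _)

lemma toReal_apply_fin_dirac (x p : Fin N → ℝ) (hp : ∀ i, 0 ≤ p i) (A : Set ℝ) :
    ((∑ i, ENNReal.ofReal (p i) • Measure.dirac (x i)) A).toReal
      = ∑ i, p i * A.indicator 1 (x i) := by
  rw [Measure.finset_sum_apply, ENNReal.toReal_sum]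
  · refine Finset.sum_congr rfl fun i _ => ?_
    rw [Measure.smul_apply, Measure.dirac_apply, smul_eq_mul]
    by_cases h : x i ∈ A
    · simp [Set.indicator_of_mem h, ENNReal.toReal_ofReal (hp i)]
    · simp [Set.indicator_of_notMem h]
  · intro i _
    rw [Measure.smul_apply, Measure.dirac_apply, smul_eq_mul]
    by_cases h : x i ∈ A
    · simp [Set.indicator_of_mem h]
    · simp [Set.indicator_of_notMem h]

lemma indicator_Ici_intervalIntegrable (a b c : ℝ) :
    IntervalIntegrable ((Ici a).indicator (fun _ => (1:ℝ))) volume b c := by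
  apply Monotone.intervalIntegrable
  intro s t hst
  simp only [Set.indicator_apply, mem_Ici]
  split_ifs with h1 h2
  · exact le_refl _
  · exact absurd (le_trans h1 hst) h2
  · norm_num
  · exact le_refl _

lemma integral_indicator_Ici (a y : ℝ) (ha : 0 ≤ a) (hy : 0 ≤ y) :
    (∫ t in (0:ℝ)..y, (Ici a).indicator (fun _ => (1:ℝ)) t) = max (y - a) 0 := by
  rw [intervalIntegral.integral_of_le hy, MeasureTheory.integral_indicator measurableSet_Ici,
    Measure.restrict_restrict measurableSet_Ici, setIntegral_const, smul_eq_mul, mul_one]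
  have hvol : volume (Ici a ∩ Ioc 0 y) = ENNReal.ofReal (y - a) := by
    rcases eq_or_lt_of_le ha with h0 | h0
    · rw [← h0]
      have : Ici (0:ℝ) ∩ Ioc 0 y = Ioc 0 y := by
        apply inter_eq_self_of_subset_right; exact fun t ht => le_of_lt ht.1
      rw [this, Real.volume_Ioc]
    · have : Ici a ∩ Ioc 0 y = Icc a y := by
        ext t; constructor
        · rintro ⟨h1, _, h3⟩; exact ⟨h1, h3⟩
        · rintro ⟨h1, h2⟩; exact ⟨h1, lt_of_lt_of_le h0 h1, h2⟩
      rw [this, Real.volume_Icc]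
  rw [measureReal_def, hvol]
  rcases le_total a y with h | h
  · rw [ENNReal.toReal_ofReal (sub_nonneg.2 h), max_eq_left (sub_nonneg.2 h)]
  · rw [ENNReal.ofReal_eq_zero.2 (sub_nonpos.2 h), ENNReal.toReal_zero,
      max_eq_right (sub_nonpos.2 h)]

lemma cdf_integral_fin_dirac (x p : Fin N → ℝ) (hx : ∀ i, x i ∈ Icc (0:ℝ) 1)
    (hp : ∀ i, 0 ≤ p i) (y : ℝ) (hy : 0 ≤ y) :
    (∫ t in (0:ℝ)..y, ((∑ i, ENNReal.ofReal (p i) • Measure.dirac (x i)) (Iic t)).toReal)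
      = ∑ i, p i * max (y - x i) 0 := by
  have heq : ∀ t : ℝ, ((∑ i, ENNReal.ofReal (p i) • Measure.dirac (x i)) (Iic t)).toReal
      = ∑ i, p i * (Ici (x i)).indicator (fun _ => (1:ℝ)) t := by
    intro t
    rw [toReal_apply_fin_dirac x p hp]
    refine Finset.sum_congr rfl fun i _ => ?_
    by_cases h : x i ≤ t
    · rw [Set.indicator_of_mem (Set.mem_Iic.mpr h), Set.indicator_of_mem (Set.mem_Ici.mpr h), Pi.one_apply]
    · rw [Set.indicator_of_notMem (fun hh => h (Set.mem_Iic.mp hh))]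
      rw [Set.indicator_of_notMem (fun hh => h (Set.mem_Ici.mp hh))]
  rw [intervalIntegral.integral_congr (fun t _ => heq t), intervalIntegral.integral_finset_sum
    (fun i _ => (indicator_Ici_intervalIntegrable (x i) 0 y).const_mul (p i))]
  refine Finset.sum_congr rfl fun i _ => ?_
  rw [intervalIntegral.integral_const_mul, integral_indicator_Ici (x i) y (hx i).1 hy]

lemma nu_apply (hf_cont : Continuous f) (A : Set ℝ) (hA : MeasurableSet A) :
    densityMeasure f A = ∫⁻ s in A ∩ Icc (0:ℝ) 1, ENNReal.ofReal (f s) := by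
  rw [densityMeasure, withDensity_apply _ hA, Measure.restrict_restrict hA]

lemma nu_Iic (hf_cont : Continuous f) (hf_pos : ∀ t ∈ Icc (0:ℝ) 1, 0 < f t)
    {t : ℝ} (ht : t ∈ Icc (0:ℝ) 1) :
    densityMeasure f (Iic t) = ENNReal.ofReal (∫ s in (0:ℝ)..t, f s) := by
  rw [nu_apply hf_cont _ measurableSet_Iic]
  have hset : Iic t ∩ Icc (0:ℝ) 1 = Icc 0 t := by
    ext s
    constructor
    · rintro ⟨h1, h2, _⟩; exact ⟨h2, h1⟩
    · rintro ⟨h1, h2⟩; exact ⟨h2, h1, h2.trans ht.2⟩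
  rw [hset, ← MeasureTheory.ofReal_integral_eq_lintegral_ofReal]
  · rw [intervalIntegral.integral_of_le ht.1, ← MeasureTheory.integral_Icc_eq_integral_Ioc]
  · exact (hf_cont.integrableOn_Icc)
  · filter_upwards [ae_restrict_mem measurableSet_Icc] with s hs
    exact (hf_pos s ⟨hs.1, hs.2.trans ht.2⟩).le

lemma nu_prob (hf_cont : Continuous f) (hf_pos : ∀ t ∈ Icc (0:ℝ) 1, 0 < f t)
    (hf_prob : (∫ t in (0:ℝ)..1, f t) = 1) :
    IsProbabilityMeasure (densityMeasure f) := by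
  constructor
  rw [nu_apply hf_cont _ MeasurableSet.univ, univ_inter,
    ← MeasureTheory.ofReal_integral_eq_lintegral_ofReal hf_cont.integrableOn_Icc]
  · rw [MeasureTheory.integral_Icc_eq_integral_Ioc,
      ← intervalIntegral.integral_of_le (by norm_num : (0:ℝ) ≤ 1), hf_prob, ENNReal.ofReal_one]
  · filter_upwards [ae_restrict_mem measurableSet_Icc] with s hs
    exact (hf_pos s hs).le

lemma nu_mean (hf_cont : Continuous f) (hf_pos : ∀ t ∈ Icc (0:ℝ) 1, 0 < f t) :
    (∫ t, t ∂(densityMeasure f)) = ∫ s in (0:ℝ)..1, s * f s := by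
  have h1 : (fun t => ENNReal.ofReal (f t)) = fun t => ((f t).toNNReal : ENNReal) := rfl
  rw [densityMeasure, h1, integral_withDensity_eq_integral_smul
    (by exact (hf_cont.measurable).real_toNNReal) (fun t => t)]
  have : ∀ s ∈ Icc (0:ℝ) 1, (f s).toNNReal • s = s * f s := by
    intro s hs
    simp [NNReal.smul_def, Real.coe_toNNReal _ (hf_pos s hs).le, mul_comm]
  rw [MeasureTheory.setIntegral_congr_fun measurableSet_Icc this,
    MeasureTheory.integral_Icc_eq_integral_Ioc,
    ← intervalIntegral.integral_of_le (by norm_num : (0:ℝ) ≤ 1)]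

lemma nu_cdf_eq (hf_cont : Continuous f) (hf_pos : ∀ t ∈ Icc (0:ℝ) 1, 0 < f t)
    {t : ℝ} (ht : t ∈ Icc (0:ℝ) 1) :
    (densityMeasure f (Iic t)).toReal = ∫ s in (0:ℝ)..t, f s := by
  rw [nu_Iic hf_cont hf_pos ht, ENNReal.toReal_ofReal]
  exact intervalIntegral.integral_nonneg ht.1
    (fun s hs => (hf_pos s ⟨hs.1, hs.2.trans ht.2⟩).le)

lemma integral_cdf_eq (hf_cont : Continuous f) (hf_pos : ∀ t ∈ Icc (0:ℝ) 1, 0 < f t)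
    (hf_prob : (∫ t in (0:ℝ)..1, f t) = 1) :
    (∫ t in (0:ℝ)..1, (densityMeasure f (Iic t)).toReal)
      = 1 - ∫ s in (0:ℝ)..1, s * f s := by
  have h01 : uIcc (0:ℝ) 1 = Icc 0 1 := uIcc_of_le (by norm_num)
  have hcongr : ∀ t ∈ uIcc (0:ℝ) 1, (densityMeasure f (Iic t)).toReal
      = (∫ s in (0:ℝ)..t, f s) * 1 := by
    intro t ht
    rw [h01] at ht
    rw [nu_cdf_eq hf_cont hf_pos ht, mul_one]
  rw [intervalIntegral.integral_congr hcongr]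
  have hu : ∀ x ∈ uIcc (0:ℝ) 1, HasDerivAt (fun t => ∫ s in (0:ℝ)..t, f s) (f x) x :=
    fun x _ => intervalIntegral.integral_hasDerivAt_right (hf_cont.intervalIntegrable _ _)
      (hf_cont.stronglyMeasurable.stronglyMeasurableAtFilter) hf_cont.continuousAt
  have hv : ∀ x ∈ uIcc (0:ℝ) 1, HasDerivAt (fun t : ℝ => t) (1:ℝ) x := fun x _ => hasDerivAt_id x
  rw [intervalIntegral.integral_mul_deriv_eq_deriv_mul hu hv
    (hf_cont.intervalIntegrable _ _) intervalIntegrable_const]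
  rw [intervalIntegral.integral_same, hf_prob]
  have : (∫ x in (0:ℝ)..1, f x * x) = ∫ x in (0:ℝ)..1, x * f x :=
    intervalIntegral.integral_congr fun x _ => mul_comm _ _
  rw [this]
  ring

lemma nu_cdf_monotone (hf_cont : Continuous f) (hf_pos : ∀ t ∈ Icc (0:ℝ) 1, 0 < f t)
    (hf_prob : (∫ t in (0:ℝ)..1, f t) = 1) :
    Monotone (fun t => (densityMeasure f (Iic t)).toReal) := by
  have := nu_prob hf_cont hf_pos hf_prob
  intro s t hst
  exact ENNReal.toReal_le_toReal (measure_ne_top _ _) (measure_ne_top _ _)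
    |>.mpr (measure_mono (Iic_subset_Iic.mpr hst)) |>.trans_eq rfl

lemma nu_cdf_le_one (hf_cont : Continuous f) (hf_pos : ∀ t ∈ Icc (0:ℝ) 1, 0 < f t)
    (hf_prob : (∫ t in (0:ℝ)..1, f t) = 1) (t : ℝ) :
    (densityMeasure f (Iic t)).toReal ≤ 1 := by
  have := nu_prob hf_cont hf_pos hf_prob
  have h := prob_le_one (μ := densityMeasure f) (s := Iic t)
  calc (densityMeasure f (Iic t)).toReal ≤ (1:ENNReal).toReal :=
        ENNReal.toReal_le_toReal (measure_ne_top _ _) ENNReal.one_ne_top |>.mpr h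
    _ = 1 := ENNReal.toReal_one

lemma mean_mem_Icc (hf_cont : Continuous f) (hf_pos : ∀ t ∈ Icc (0:ℝ) 1, 0 < f t)
    (hf_prob : (∫ t in (0:ℝ)..1, f t) = 1) :
    (∫ t, t ∂(densityMeasure f)) ∈ Icc (0:ℝ) 1 := by
  rw [nu_mean hf_cont hf_pos]
  constructor
  · exact intervalIntegral.integral_nonneg (by norm_num)
      (fun s hs => mul_nonneg hs.1 (hf_pos s hs).le)
  · have h1 : (∫ s in (0:ℝ)..1, s * f s) ≤ ∫ s in (0:ℝ)..1, f s := by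
      apply intervalIntegral.integral_mono_on (by norm_num)
      · exact ((continuous_id.mul hf_cont).intervalIntegrable _ _)
      · exact hf_cont.intervalIntegrable _ _
      · intro s hs
        have : s * f s ≤ 1 * f s := mul_le_mul_of_nonneg_right hs.2 (hf_pos s hs).le
        linarith
    linarith [hf_prob]

lemma key_dirac_ineq (hf_cont : Continuous f) (hf_pos : ∀ t ∈ Icc (0:ℝ) 1, 0 < f t)
    (hf_prob : (∫ t in (0:ℝ)..1, f t) = 1) {y : ℝ} (hy : y ∈ Icc (0:ℝ) 1) :
    max (y - ∫ t, t ∂(densityMeasure f)) 0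
      ≤ ∫ t in (0:ℝ)..y, (densityMeasure f (Iic t)).toReal := by
  set F := fun t => (densityMeasure f (Iic t)).toReal with hF
  have hmono := nu_cdf_monotone hf_cont hf_pos hf_prob
  have hint : ∀ a b : ℝ, IntervalIntegrable F volume a b := fun a b =>
    hmono.intervalIntegrable
  have hsplit : (∫ t in (0:ℝ)..y, F t) + (∫ t in y..1, F t) = ∫ t in (0:ℝ)..1, F t :=
    intervalIntegral.integral_add_adjacent_intervals (hint 0 y) (hint y 1)
  have htail : (∫ t in y..1, F t) ≤ 1 - y := by
    calc (∫ t in y..1, F t) ≤ ∫ t in y..1, (1:ℝ) :=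
          intervalIntegral.integral_mono_on hy.2 (hint y 1) intervalIntegrable_const
            (fun t _ => nu_cdf_le_one hf_cont hf_pos hf_prob t)
      _ = 1 - y := by simp
  have htot : (∫ t in (0:ℝ)..1, F t) = 1 - ∫ s in (0:ℝ)..1, s * f s :=
    integral_cdf_eq hf_cont hf_pos hf_prob
  apply max_le
  · rw [nu_mean hf_cont hf_pos]
    have := hsplit
    nlinarith [htail, htot, hsplit]
  · exact intervalIntegral.integral_nonneg hy.1 (fun t _ => ENNReal.toReal_nonneg)

lemma sum_pad {M : Type*} [AddCommMonoid M] {k N : ℕ} (hk : k ≤ N) (g : Fin k → M) :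
    (∑ i : Fin N, if h : (i : ℕ) < k then g ⟨i, h⟩ else 0) = ∑ j : Fin k, g j := by
  rw [Fin.sum_univ_eq_sum_range (fun i => if h : i < k then g ⟨i, h⟩ else 0) N]
  have h2 : (∑ j : Fin k, g j) = ∑ i ∈ Finset.range k, if h : i < k then g ⟨i, h⟩ else 0 := by
    rw [← Fin.sum_univ_eq_sum_range (fun i => if h : i < k then g ⟨i, h⟩ else 0) k]
    exact Finset.sum_congr rfl (fun j _ => by rw [dif_pos j.isLt])
  rw [h2]
  refine (Finset.sum_subset (Finset.range_subset_range.mpr hk) ?_).symm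
  intro i _ hi
  rw [Finset.mem_range, not_lt] at hi
  rw [dif_neg (not_lt.mpr hi)]

lemma sum_pad_finset {M : Type*} [AddCommMonoid M] {N : ℕ} (S : Finset ℝ) (hk : S.card ≤ N)
    (ψ : ℝ → M) :
    (∑ i : Fin N, if h : (i : ℕ) < S.card then ψ (S.equivFin.symm ⟨i, h⟩ : ℝ) else 0)
      = ∑ s ∈ S, ψ s := by
  rw [sum_pad hk (fun j => ψ (S.equivFin.symm j : ℝ)), Equiv.sum_comp S.equivFin.symm
    (fun s => ψ (s : ℝ))]
  exact Finset.sum_coe_sort S ψ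

lemma decompose_measure {N : ℕ} (G : Measure ℝ) [IsProbabilityMeasure G]
    (hsupp : G ((Icc (0:ℝ) 1)ᶜ) = 0) (S : Finset ℝ) (hcard : S.card ≤ N)
    (hS : G ((↑S : Set ℝ)ᶜ) = 0) :
    ∃ x p : Fin N → ℝ, (∀ i, x i ∈ Icc (0:ℝ) 1) ∧ (∀ i, 0 ≤ p i) ∧
      G = ∑ i, ENNReal.ofReal (p i) • Measure.dirac (x i) := by
  classical
  set S' : Finset ℝ := S.filter (· ∈ Icc (0:ℝ) 1) with hS'def
  have hS'card : S'.card ≤ N := (Finset.card_filter_le _ _).trans hcard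
  have hS'null : G ((↑S' : Set ℝ)ᶜ) = 0 := by
    refine measure_mono_null ?_ (measure_union_null hS hsupp)
    intro t ht
    rw [mem_compl_iff, Finset.mem_coe] at ht
    by_cases h1 : t ∈ S
    · by_cases h2 : t ∈ Icc (0:ℝ) 1
      · exact absurd (Finset.mem_filter.mpr ⟨h1, h2⟩) ht
      · exact mem_union_right _ h2
    · exact mem_union_left _ (by simpa using h1)
  set k := S'.card with hk
  set e : Fin k → ℝ := fun j => (S'.equivFin.symm j : ℝ) with he
  have he_mem : ∀ j, e j ∈ S' := fun j => (S'.equivFin.symm j).2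
  refine ⟨fun i => if h : (i : ℕ) < k then e ⟨i, h⟩ else 0,
    fun i => if h : (i : ℕ) < k then (G {e ⟨i, h⟩}).toReal else 0, ?_, ?_, ?_⟩
  · intro i
    by_cases h : (i : ℕ) < k
    · simp only [dif_pos h]
      have := he_mem ⟨i, h⟩
      rw [hS'def, Finset.mem_filter] at this
      exact this.2
    · simp only [dif_neg h]
      exact ⟨le_refl 0, by norm_num⟩
  · intro i
    by_cases h : (i : ℕ) < k
    · simp only [dif_pos h]
      exact ENNReal.toReal_nonneg
    · simp only [dif_neg h]
      exact le_refl 0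
  · ext A hA
    rw [Measure.finset_sum_apply]
    have hterm : ∀ i : Fin N,
        (ENNReal.ofReal (if h : (i : ℕ) < k then (G {e ⟨i, h⟩}).toReal else 0) •
          Measure.dirac (if h : (i : ℕ) < k then e ⟨i, h⟩ else 0)) A
        = if h : (i : ℕ) < k then G {e ⟨i, h⟩} * A.indicator 1 (e ⟨i, h⟩) else 0 := by
      intro i
      by_cases h : (i : ℕ) < k
      · simp only [dif_pos h]
        rw [Measure.smul_apply, Measure.dirac_apply, smul_eq_mul,
          ENNReal.ofReal_toReal (measure_ne_top G _)]
      · simp only [dif_neg h]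
        rw [Measure.smul_apply, smul_eq_mul, ENNReal.ofReal_zero, zero_mul]
    rw [Finset.sum_congr rfl (fun i _ => hterm i),
      sum_pad_finset S' hS'card (fun s => G {s} * A.indicator 1 s)]
    -- now: G A = ∑ s in S', G {s} * A.indicator 1 s
    have hGA : G A = G (A ∩ ↑S') := by
      have h2 : G (A \ ↑S') = 0 := measure_mono_null (diff_subset_compl A (↑S')) hS'null
      rw [← measure_inter_add_diff A (S'.finite_toSet.measurableSet), h2, add_zero]
    have hunion : A ∩ ↑S' = ⋃ s ∈ S'.filter (· ∈ A), ({s} : Set ℝ) := by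
      ext t
      simp only [mem_inter_iff, Finset.mem_coe, mem_iUnion, Finset.mem_filter, mem_singleton_iff]
      constructor
      · rintro ⟨h1, h2⟩; exact ⟨t, ⟨h2, h1⟩, rfl⟩
      · rintro ⟨s, ⟨hs1, hs2⟩, rfl⟩; exact ⟨hs2, hs1⟩
    rw [hGA, hunion, measure_biUnion_finset ?hd (fun b _ => measurableSet_singleton b)]
    · rw [Finset.sum_filter]
      refine Finset.sum_congr rfl fun s _ => ?_
      by_cases hsA : s ∈ A
      · rw [if_pos hsA, Set.indicator_of_mem hsA, Pi.one_apply, mul_one]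
      · rw [if_neg hsA, Set.indicator_of_notMem hsA, mul_zero]
    · intro s _ t _ hst
      simp [Set.disjoint_singleton, hst]
/-- `G` is a mean-preserving contraction of `ν`: it has the same mean and its
integral distribution function lies below that of `ν`. -/
def IsMPCof (ν G : Measure ℝ) : Prop :=
  (∫ t, t ∂G) = (∫ t, t ∂ν) ∧
    ∀ x ∈ Icc (0:ℝ) 1,
      (∫ t in (0:ℝ)..x, (G (Iic t)).toReal) ≤ ∫ t in (0:ℝ)..x, (ν (Iic t)).toReal

/-- The support of `G` contains at most `N` points. -/
def FiniteSupportLE (G : Measure ℝ) (N : ℕ) : Prop :=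
  ∃ S : Finset ℝ, S.card ≤ N ∧ G ((↑S : Set ℝ)ᶜ) = 0

/-- A feasible information structure: a probability measure on `[0,1]` that is a
mean-preserving contraction of `ν` and has at most `N` support points. -/
def Feasible (f : ℝ → ℝ) (N : ℕ) (G : Measure ℝ) : Prop :=
  IsProbabilityMeasure G ∧ G ((Icc (0:ℝ) 1)ᶜ) = 0 ∧
    IsMPCof (densityMeasure f) G ∧ FiniteSupportLE G N

/-- existence of an optimal coarse information structure. -/
theorem stmt_10 (f u : ℝ → ℝ) (N : ℕ) (hN : 1 ≤ N)
    (hf_cont : Continuous f) (hf_pos : ∀ t ∈ Icc (0:ℝ) 1, 0 < f t)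
    (hf_prob : (∫ t in (0:ℝ)..1, f t) = 1)
    (hu_cont : ContinuousOn u (Icc (0:ℝ) 1)) :
    ∃ G : Measure ℝ, Feasible f N G ∧
      ∀ G' : Measure ℝ, Feasible f N G' → (∫ t, u t ∂G') ≤ ∫ t, u t ∂G := by
  classical
  set m := ∫ t, t ∂(densityMeasure f) with hm
  set φ : ℝ → ℝ := fun y => ∫ t in (0:ℝ)..y, ((densityMeasure f) (Iic t)).toReal with hφ
  set K : Set ((Fin N → ℝ) × (Fin N → ℝ)) :=
    {z | (∀ i, z.1 i ∈ Icc (0:ℝ) 1) ∧ (∀ i, 0 ≤ z.2 i) ∧ (∑ i, z.2 i) = 1 ∧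
      (∑ i, z.2 i * z.1 i) = m ∧
      ∀ y ∈ Icc (0:ℝ) 1, (∑ i, z.2 i * max (y - z.1 i) 0) ≤ φ y} with hK
  have c1 : ∀ i : Fin N, Continuous fun z : (Fin N → ℝ) × (Fin N → ℝ) => z.1 i :=
    fun i => (continuous_apply i).comp continuous_fst
  have c2 : ∀ i : Fin N, Continuous fun z : (Fin N → ℝ) × (Fin N → ℝ) => z.2 i :=
    fun i => (continuous_apply i).comp continuous_snd
  have hclosed : IsClosed K := by
    have hKeq : K = (⋂ i, {z : (Fin N → ℝ) × (Fin N → ℝ) | z.1 i ∈ Icc (0:ℝ) 1}) ∩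
        ((⋂ i, {z : (Fin N → ℝ) × (Fin N → ℝ) | 0 ≤ z.2 i}) ∩
          ({z : (Fin N → ℝ) × (Fin N → ℝ) | (∑ i, z.2 i) = 1} ∩
            ({z : (Fin N → ℝ) × (Fin N → ℝ) | (∑ i, z.2 i * z.1 i) = m} ∩
              ⋂ y ∈ Icc (0:ℝ) 1, {z : (Fin N → ℝ) × (Fin N → ℝ) |
                (∑ i, z.2 i * max (y - z.1 i) 0) ≤ φ y}))) := by
      ext z
      simp only [hK, mem_setOf_eq, mem_inter_iff, mem_iInter]
    rw [hKeq]
    refine (isClosed_iInter fun i => (isClosed_Icc.preimage (c1 i))).inter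
      ((isClosed_iInter fun i => isClosed_le continuous_const (c2 i)).inter
        ((isClosed_eq (continuous_finset_sum _ fun i _ => c2 i) continuous_const).inter
          ((isClosed_eq (continuous_finset_sum _ fun i _ => (c2 i).mul (c1 i))
              continuous_const).inter
            (isClosed_biInter fun y _ => isClosed_le
              (continuous_finset_sum _ fun i _ =>
                (c2 i).mul ((continuous_const.sub (c1 i)).max continuous_const))
              continuous_const))))
  have hsub : K ⊆ (univ.pi fun _ : Fin N => Icc (0:ℝ) 1) ×ˢ
      (univ.pi fun _ : Fin N => Icc (0:ℝ) 1) := by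
    rintro z ⟨hx, hp, hsum, -, -⟩
    refine ⟨fun i _ => hx i, fun i _ => ⟨hp i, ?_⟩⟩
    calc z.2 i ≤ ∑ j, z.2 j := Finset.single_le_sum (fun j _ => hp j) (Finset.mem_univ i)
      _ = 1 := hsum
  have hcomp : IsCompact K := IsCompact.of_isClosed_subset
    ((isCompact_univ_pi fun _ => isCompact_Icc).prod (isCompact_univ_pi fun _ => isCompact_Icc))
    hclosed hsub
  have hmIcc : m ∈ Icc (0:ℝ) 1 := mean_mem_Icc hf_cont hf_pos hf_prob
  have hne : K.Nonempty := by
    refine ⟨(fun _ => m, fun i => if i = (⟨0, hN⟩ : Fin N) then 1 else 0), ?_, ?_, ?_, ?_, ?_⟩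
    · intro i; exact hmIcc
    · intro i; by_cases h : i = (⟨0, hN⟩ : Fin N) <;> simp [h]
    · simp [Finset.sum_ite_eq']
    · simp [Finset.sum_ite_eq', ite_mul]
    · intro y hy
      have h1 : (∑ i : Fin N, (if i = (⟨0, hN⟩ : Fin N) then (1:ℝ) else 0) * max (y - m) 0)
          = max (y - m) 0 := by
        simp [Finset.sum_ite_eq', ite_mul]
      rw [h1]
      exact key_dirac_ineq hf_cont hf_pos hf_prob hy
  have hgcont : ContinuousOn (fun z : (Fin N → ℝ) × (Fin N → ℝ) =>
      ∑ i, z.2 i * u (z.1 i)) K := by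
    apply continuousOn_finset_sum
    intro i _
    refine ContinuousOn.mul (c2 i).continuousOn ?_
    exact hu_cont.comp (c1 i).continuousOn (fun z hz => hz.1 i)
  -- feasibility of the measure associated to a point of K
  have feas_of_mem : ∀ w ∈ K,
      Feasible f N (∑ i, ENNReal.ofReal (w.2 i) • Measure.dirac (w.1 i)) ∧
        (∫ t, u t ∂(∑ i, ENNReal.ofReal (w.2 i) • Measure.dirac (w.1 i)))
          = ∑ i, w.2 i * u (w.1 i) := by
    rintro w ⟨hx, hp, hsum, hmean, hcons⟩
    constructor
    · refine ⟨⟨?_⟩, ?_, ⟨?_, ?_⟩, ?_⟩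
      · rw [Measure.finset_sum_apply]
        have : ∀ i : Fin N, (ENNReal.ofReal (w.2 i) • Measure.dirac (w.1 i)) univ
            = ENNReal.ofReal (w.2 i) := by
          intro i
          rw [Measure.smul_apply, Measure.dirac_apply, Set.indicator_univ, Pi.one_apply,
            smul_eq_mul, mul_one]
        rw [Finset.sum_congr rfl (fun i _ => this i),
          ← ENNReal.ofReal_sum_of_nonneg (fun i _ => hp i), hsum, ENNReal.ofReal_one]
      · rw [Measure.finset_sum_apply]
        refine Finset.sum_eq_zero fun i _ => ?_
        rw [Measure.smul_apply, Measure.dirac_apply,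
          Set.indicator_of_notMem (Set.notMem_compl_iff.mpr (hx i)), smul_eq_mul, mul_zero]
      · rw [show (∫ t, t ∂(∑ i, ENNReal.ofReal (w.2 i) • Measure.dirac (w.1 i)))
            = ∑ i, w.2 i * w.1 i from integral_fin_dirac w.1 w.2 hp (fun t => t), hmean]
      · intro y hy
        rw [cdf_integral_fin_dirac w.1 w.2 hx hp y hy.1]
        exact hcons y hy
      · refine ⟨Finset.image w.1 Finset.univ, ?_, ?_⟩
        · exact (Finset.card_image_le).trans (by simp)
        · rw [Measure.finset_sum_apply]
          refine Finset.sum_eq_zero fun i _ => ?_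
          have hmem : w.1 i ∈ (↑(Finset.image w.1 Finset.univ) : Set ℝ) :=
            Finset.mem_coe.mpr (Finset.mem_image_of_mem _ (Finset.mem_univ i))
          rw [Measure.smul_apply, Measure.dirac_apply,
            Set.indicator_of_notMem (Set.notMem_compl_iff.mpr hmem), smul_eq_mul, mul_zero]
    · exact integral_fin_dirac w.1 w.2 hp u
  -- every feasible measure comes from a point of K
  have mem_of_feasible : ∀ G' : Measure ℝ, Feasible f N G' →
      ∃ w ∈ K, (∫ t, u t ∂G') = ∑ i, w.2 i * u (w.1 i) := by
    rintro G' ⟨hGp, hGsupp, ⟨hGmean, hGcons⟩, S, hcard, hSnull⟩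
    haveI := hGp
    obtain ⟨x, p, hx, hp, hGeq⟩ := decompose_measure G' hGsupp S hcard hSnull
    have hpsum : (∑ i, p i) = 1 := by
      have h1 := toReal_apply_fin_dirac x p hp univ
      rw [← hGeq, measure_univ, ENNReal.toReal_one] at h1
      simp only [Set.indicator_univ, Pi.one_apply, mul_one] at h1
      exact h1.symm
    refine ⟨(x, p), ⟨hx, hp, hpsum, ?_, ?_⟩, ?_⟩
    · rw [hGeq, show (∫ t, t ∂(∑ i, ENNReal.ofReal (p i) • Measure.dirac (x i)))
        = ∑ i, p i * x i from integral_fin_dirac x p hp (fun t => t)] at hGmean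
      exact hGmean
    · intro y hy
      have h2 := hGcons y hy
      rw [hGeq, cdf_integral_fin_dirac x p hx hp y hy.1] at h2
      exact h2
    · rw [hGeq, integral_fin_dirac x p hp u]
  obtain ⟨z, hzK, hzmax⟩ := hcomp.exists_isMaxOn hne hgcont
  refine ⟨∑ i, ENNReal.ofReal (z.2 i) • Measure.dirac (z.1 i), (feas_of_mem z hzK).1, ?_⟩
  intro G' hG'
  obtain ⟨w, hwK, hwo⟩ := mem_of_feasible G' hG'
  rw [hwo, (feas_of_mem z hzK).2]
  exact hzmax hwK
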